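/- Suppose Λ_n < ∞. Then for every β > Λ_n, the normalised partition function satisfies the two-sided bound 1 ≤ Z_n(β) ≤ β/(β − Λ_n). -/

import Mathlib

open Filter MeasureTheory
open scoped ENNReal

/-- Maximum score `z_n^*`. -/
noncomputable def zmax (n : ℕ) (z : Fin n → ℝ) : ℝ := sSup (Set.range z)

/-- Gap `g_{n,j} = z_n^* - z_{n,j}`. -/
noncomputable def gap (n : ℕ) (z : Fin n → ℝ) (j : Fin n) : ℝ := zmax n z - z j

/-- Cumulative gap-counting function `N_n(t)`. -/
noncomputable def Ncount (n : ℕ) (z : Fin n → ℝ) (t : ℝ) : ℕ :=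
  {j : Fin n | gap n z j ≤ t}.ncard

/-- Normalised partition function `Z_n(β)`. -/
noncomputable def Zfun (n : ℕ) (z : Fin n → ℝ) (β : ℝ) : ℝ :=
  ∑ j : Fin n, Real.exp (-(β * gap n z j))

/-- Softmax probabilities `p_{n,j}(β)`. -/
noncomputable def softmaxP (n : ℕ) (z : Fin n → ℝ) (β : ℝ) (j : Fin n) : ℝ :=
  Real.exp (β * z j) / ∑ ℓ : Fin n, Real.exp (β * z ℓ)

/-- Shannon entropy `H_n(β)`. -/
noncomputable def entropyH (n : ℕ) (z : Fin n → ℝ) (β : ℝ) : ℝ :=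
  -∑ j : Fin n, softmaxP n z β j * Real.log (softmaxP n z β j)

/-- The set of values `log N_n(t) / t` over `t > 0`, whose supremum is `Λ_n`. -/
def lamSet (n : ℕ) (z : Fin n → ℝ) : Set ℝ :=
  {r | ∃ t : ℝ, 0 < t ∧ r = Real.log (Ncount n z t) / t}

/-- Second-largest entry of a finite vector (equals the largest in case of ties). -/
noncomputable def secondLargest (n : ℕ) (v : Fin n → ℝ) : ℝ :=
  sInf (Set.range fun i => sSup (v '' {j | j ≠ i}))

/-- Top-two weight gap `D_n(β)`. -/
noncomputable def Dgap (n : ℕ) (z : Fin n → ℝ) (β : ℝ) : ℝ :=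
  sSup (Set.range (softmaxP n z β)) - secondLargest n (softmaxP n z β)

/-- Rank gap `G_n(β) = max_{i,j} |p_{n,i}(β) - p_{n,j}(β)|`. -/
noncomputable def Ggap (n : ℕ) (z : Fin n → ℝ) (β : ℝ) : ℝ :=
  sSup {x | ∃ i j : Fin n, x = |softmaxP n z β i - softmaxP n z β j|}

/-- Resolved accumulation scale `Λ_n^{(r)}` (with `sup ∅ = 0`), valued in `ℝ≥0∞`. -/
noncomputable def resolvedLam (n : ℕ) (z : Fin n → ℝ) (r : ℝ) : ℝ≥0∞ :=
  ⨆ t ∈ {t : ℝ | 0 < t ∧ r < Real.log (Ncount n z t)},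
    ENNReal.ofReal ((Real.log (Ncount n z t) - r) / t)

/-- Laplace envelope `S_n(β) = sup_{t ≥ 0} (log N_n(t) - β t)`. -/
noncomputable def Sfun (n : ℕ) (z : Fin n → ℝ) (β : ℝ) : ℝ :=
  sSup {x | ∃ t : ℝ, 0 ≤ t ∧ x = Real.log (Ncount n z t) - β * t}

/-- Rank boundary `B_n^rank(r) = sup {β ≥ 0 : log Z_n(β) ≥ r}`, valued in `ℝ≥0∞`. -/
noncomputable def rankBoundary (n : ℕ) (z : Fin n → ℝ) (r : ℝ) : ℝ≥0∞ :=
  ⨆ β ∈ {β : ℝ | 0 ≤ β ∧ r ≤ Real.log (Zfun n z β)}, ENNReal.ofReal β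

/-- `X_n ≍ (log n)^ξ`. -/
def IsLogAsymp (X : ℕ → ℝ) (ξ : ℝ) : Prop :=
  ∃ c₁ c₂ : ℝ, 0 < c₁ ∧ c₁ ≤ c₂ ∧
    ∀ᶠ n : ℕ in Filter.atTop,
      c₁ * Real.log n ^ ξ ≤ X n ∧ X n ≤ c₂ * Real.log n ^ ξ

-- p-series partial sum bound
lemma sum_bound_aux (s : ℝ) (hs : 1 < s) (n : ℕ) :
    ∑ i ∈ Finset.range n, ((i : ℝ) + 1) ^ (-s) ≤ s / (s - 1) := by
  have hs1 : (0:ℝ) < s - 1 := by linarith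
  rcases n with _ | m
  · simp; positivity
  rw [Finset.sum_range_succ']
  have h0 : ((0:ℕ):ℝ) + 1 = 1 := by norm_num
  have hf0 : (((0:ℕ):ℝ) + 1) ^ (-s) = 1 := by rw [h0, Real.one_rpow]
  rw [hf0]
  have hanti : AntitoneOn (fun x : ℝ => x ^ (-s)) (Set.Icc 1 (1 + m)) := by
    intro x hx y hy hxy
    exact Real.rpow_le_rpow_of_nonpos (lt_of_lt_of_le one_pos hx.1) hxy (by linarith)
  have hint := hanti.sum_le_integral
  have hInt : ∫ x in (1:ℝ)..(1 + m), x ^ (-s) = ((1 + (m:ℝ)) ^ (-s + 1) - 1 ^ (-s + 1)) / (-s + 1) := by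
    apply integral_rpow
    right
    constructor
    · intro h; linarith
    · rw [Set.uIcc_of_le (by linarith [Nat.cast_nonneg (α := ℝ) m])]
      intro h
      exact absurd h.1 (by norm_num)
  have hsum : ∑ i ∈ Finset.range m, ((i:ℝ) + 1 + 1) ^ (-s)
      ≤ ((1 + (m:ℝ)) ^ (-s + 1) - 1 ^ (-s + 1)) / (-s + 1) := by
    rw [← hInt]
    convert hint using 2 with i
    push_cast
    ring_nf
  have hpow : (0:ℝ) ≤ (1 + (m:ℝ)) ^ (-s + 1) := Real.rpow_nonneg (by positivity) _
  have : ((1 + (m:ℝ)) ^ (-s + 1) - 1 ^ (-s + 1)) / (-s + 1) ≤ 1 / (s - 1) := by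
    rw [Real.one_rpow]
    have heq : ((1 + (m:ℝ)) ^ (-s + 1) - 1) / (-s + 1) = (1 - (1 + (m:ℝ)) ^ (-s + 1)) / (s - 1) := by
      rw [div_eq_div_iff (by linarith) (by linarith)]; ring
    rw [heq]
    gcongr
    linarith
  have : ∑ i ∈ Finset.range m, (((i:ℕ):ℝ) + 1 + 1) ^ (-s) ≤ 1 / (s-1) := le_trans hsum this
  calc (∑ i ∈ Finset.range m, (((i+1:ℕ):ℝ) + 1) ^ (-s)) + 1
      ≤ 1 / (s-1) + 1 := by
        gcongr
        convert this using 3 with i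
        · rfl
        · push_cast; ring
    _ = s / (s - 1) := by field_simp; ring


theorem stmt6 (n : ℕ) (hn : 2 ≤ n) (z : Fin n → ℝ) (Λ β : ℝ)
    (hΛ : IsLUB (lamSet n z) Λ) (hβ : Λ < β) :
    1 ≤ Zfun n z β ∧ Zfun n z β ≤ β / (β - Λ) := by
  have hfin : (Set.range z).Finite := Set.finite_range z
  have hne : (Set.range z).Nonempty := ⟨z ⟨0, by omega⟩, Set.mem_range_self _⟩
  have hgap0 : ∀ j, 0 ≤ gap n z j := fun j =>
    sub_nonneg.2 (le_csSup hfin.bddAbove ⟨j, rfl⟩)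
  obtain ⟨j0, hj0⟩ : ∃ j0, z j0 = zmax n z := hne.csSup_mem hfin
  have hgj0 : gap n z j0 = 0 := by simp [gap, hj0]
  have hlow : 1 ≤ Zfun n z β := by
    have h := Finset.single_le_sum (f := fun j => Real.exp (-(β * gap n z j)))
      (fun i _ => (Real.exp_pos _).le) (Finset.mem_univ j0)
    simpa [Zfun, hgj0] using h
  have hC : ∀ t : ℝ, 0 < t → (Ncount n z t : ℝ) ≤ Real.exp (Λ * t) := by
    intro t ht
    have hub : Real.log (Ncount n z t) / t ≤ Λ := hΛ.1 ⟨t, ht, rfl⟩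
    have hlog : Real.log (Ncount n z t) ≤ Λ * t := by
      rw [div_le_iff₀ ht] at hub; linarith
    rcases Nat.eq_zero_or_pos (Ncount n z t) with h | h
    · rw [h]; exact_mod_cast (Real.exp_pos _).le
    · have hpos : (0:ℝ) < Ncount n z t := by exact_mod_cast h
      calc (Ncount n z t : ℝ) = Real.exp (Real.log (Ncount n z t)) := (Real.exp_log hpos).symm
        _ ≤ Real.exp (Λ * t) := Real.exp_le_exp.2 hlog
  set σ := Tuple.sort (gap n z) with hσdef
  set g : Fin n → ℝ := gap n z ∘ σ with hgdef
  have hmono : Monotone g := Tuple.monotone_sort (gap n z)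
  have hNge : ∀ k : Fin n, (k : ℕ) + 1 ≤ Ncount n z (g k) := by
    intro k
    have hsub : (σ '' Set.Iic k) ⊆ {j | gap n z j ≤ g k} := by
      rintro _ ⟨i, hi, rfl⟩
      exact hmono hi
    have h1 : (σ '' Set.Iic k).ncard = (k:ℕ) + 1 := by
      rw [Set.ncard_image_of_injective _ σ.injective, ← Finset.coe_Iic,
        Set.ncard_coe_finset, Fin.card_Iic]
    calc (k:ℕ)+1 = (σ '' Set.Iic k).ncard := h1.symm
      _ ≤ Ncount n z (g k) := Set.ncard_le_ncard hsub (Set.toFinite _)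
  have hNmono : ∀ s t : ℝ, s ≤ t → Ncount n z s ≤ Ncount n z t := fun s t hst =>
    Set.ncard_le_ncard (fun j hj => le_trans hj hst) (Set.toFinite _)
  have hΛ0 : 0 ≤ Λ := by
    have hpos : 0 < Ncount n z 1 :=
      (Set.ncard_pos (Set.toFinite _)).2 ⟨j0, by simp [hgj0]⟩
    have hub : Real.log (Ncount n z 1) / 1 ≤ Λ := hΛ.1 ⟨1, one_pos, rfl⟩
    have : (0:ℝ) ≤ Real.log (Ncount n z 1) :=
      Real.log_nonneg (by exact_mod_cast hpos)
    rw [div_one] at hub; linarith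
  have hD : ∀ k : Fin n, Real.log ((k:ℕ) + 1) ≤ Λ * g k := by
    intro k
    rcases (hgap0 (σ k)).lt_or_eq with hpos | heq
    · have hN : ((k:ℕ) + 1 : ℝ) ≤ Real.exp (Λ * g k) :=
        le_trans (by exact_mod_cast hNge k) (hC (g k) hpos)
      exact (Real.log_le_iff_le_exp (by positivity)).2 hN
    · have hgk : g k = 0 := heq.symm
      rcases Nat.eq_zero_or_pos (k : ℕ) with h0 | h1
      · simp [h0, hgk]
      · exfalso
        have h2 : ∀ t : ℝ, 0 < t → (2:ℝ) ≤ Real.exp (Λ * t) := by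
          intro t ht
          have hmN : Ncount n z (g k) ≤ Ncount n z t := hNmono _ _ (by rw [hgk]; linarith)
          have h3 : (2:ℕ) ≤ Ncount n z t :=
            le_trans (le_trans (by omega) (hNge k)) hmN
          exact le_trans (by exact_mod_cast h3) (hC t ht)
        rcases eq_or_lt_of_le hΛ0 with hΛz | hΛp
        · have := h2 1 one_pos
          rw [← hΛz, zero_mul, Real.exp_zero] at this; linarith
        · set t := Real.log 2 / (2 * Λ) with htdef
          have ht : 0 < t := div_pos (Real.log_pos one_lt_two) (by linarith)
          have h4 := h2 t ht
          have hle : Real.log 2 ≤ Λ * t := by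
            have := Real.log_le_log two_pos h4
            rwa [Real.log_exp] at this
          have heq2 : Λ * t = Real.log 2 / 2 := by
            rw [htdef]; field_simp
          rw [heq2] at hle
          linarith [Real.log_pos one_lt_two]
  have hΛpos : 0 < Λ := by
    have hD1 := hD ⟨1, by omega⟩
    have hcast : (((⟨1, by omega⟩ : Fin n) : ℕ) : ℝ) + 1 = 2 := by norm_num
    rw [hcast] at hD1
    have hg1 : 0 ≤ g ⟨1, by omega⟩ := hgap0 _
    nlinarith [Real.log_pos (by norm_num : (1:ℝ) < 2)]
  set s : ℝ := β / Λ with hsdef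
  have hs1 : 1 < s := (one_lt_div hΛpos).2 hβ
  have hterm : ∀ k : Fin n, Real.exp (-(β * g k)) ≤ ((k:ℕ) + 1 : ℝ) ^ (-s) := by
    intro k
    rw [Real.rpow_def_of_pos (by positivity)]
    apply Real.exp_le_exp.2
    have hD' := hD k
    have hmul : s * Real.log ((k:ℕ)+1) ≤ s * (Λ * g k) :=
      mul_le_mul_of_nonneg_left hD' (by positivity)
    have hsl : s * (Λ * g k) = β * g k := by rw [hsdef]; field_simp
    have hgoal : Real.log (((k:ℕ):ℝ) + 1) * -s = -(s * Real.log (((k:ℕ):ℝ)+1)) := by ring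
    rw [hgoal]
    linarith
  have hZ : Zfun n z β = ∑ k : Fin n, Real.exp (-(β * g k)) := by
    rw [Zfun]
    exact (Equiv.sum_comp σ fun j => Real.exp (-(β * gap n z j))).symm
  have hsum : Zfun n z β ≤ ∑ k : Fin n, (((k:ℕ) : ℝ) + 1) ^ (-s) := by
    rw [hZ]; exact Finset.sum_le_sum fun k _ => hterm k
  have hsum2 : ∑ k : Fin n, (((k:ℕ):ℝ)+1) ^ (-s) = ∑ i ∈ Finset.range n, ((i:ℝ)+1) ^ (-s) :=
    Fin.sum_univ_eq_sum_range (fun i => ((i:ℝ)+1) ^ (-s)) n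
  have hfinal : s / (s - 1) = β / (β - Λ) := by
    rw [hsdef]
    rw [div_eq_div_iff (by rw [← hsdef]; linarith) (by linarith)]
    field_simp
  refine ⟨hlow, ?_⟩
  calc Zfun n z β ≤ ∑ i ∈ Finset.range n, ((i:ℝ)+1) ^ (-s) := by rw [← hsum2]; exact hsum
    _ ≤ s / (s-1) := sum_bound_aux s hs1 n
    _ = β / (β - Λ) := hfinal
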